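/- Let φ_1(y,a,z) = y·a/π(S(z)) − y·(1−a)/(1−π(S(z))) and φ_0(y,a,z) = (a/π(S(z)))(y − m(1,z)) − ((1−a)/(1−π(S(z))))(y − m(0,z)) + (m(1,z) − m(0,z) − β_0). Suppose h ∈ L²(P_0) satisfies: (a) E[h(Y,A,Z) | A = a, Z] does not depend on a (call it h̃(Z)), and (b) E[h̃(Z)] = 0. Then E[h(Y,A,Z)·(φ_1(Y,A,Z) − φ_0(Y,A,Z))] = 0; i.e., φ_1 − φ_0 is orthogonal in L²(P_0) to every element of the tangent space. -/

import Mathlib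

open MeasureTheory ProbabilityTheory Filter Topology

lemma memLp2_condexp {α : Type*} {m m0 : MeasurableSpace α} (hm : m ≤ m0) {μ : Measure α}
    [IsFiniteMeasure μ] {f : α → ℝ} (hf : MemLp f 2 μ) : MemLp (μ[f|m]) 2 μ := by
  have h : (fun x => (condExpL2 ℝ ℝ hm (hf.toLp f) : α → ℝ) x) =ᵐ[μ] μ[f|m] := by
    refine ae_eq_condExp_of_forall_setIntegral_eq hm (hf.integrable one_le_two)
      (fun s hs hμs => integrableOn_condExpL2_of_measure_ne_top hm hμs.ne _)
      (fun s hs hμs => ?_) (aestronglyMeasurable_condExpL2 hm _)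
    rw [integral_condExpL2_eq hm (hf.toLp f) hs hμs.ne]
    exact setIntegral_congr_ae (hm s hs) ((hf.coeFn_toLp).mono fun x hx _ => hx)
  exact (Lp.memLp _).ae_eq h

lemma mul2_integrable {α : Type*} {m0 : MeasurableSpace α} {μ : Measure α}
    {f g : α → ℝ} (hf : MemLp f 2 μ) (hg : MemLp g 2 μ) :
    Integrable (fun x => f x * g x) μ := by
  have h : MemLp (f • g) 1 μ := hg.smul hf (hpqr := ⟨by simp [ENNReal.inv_two_add_inv_two]⟩)
  rw [memLp_one_iff_integrable] at h
  exact h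

lemma integral_mul_condexp {α : Type*} {m m0 : MeasurableSpace α} (hm : m ≤ m0) {μ : Measure α}
    [IsFiniteMeasure μ] {f g : α → ℝ} (hf : StronglyMeasurable[m] f)
    (hfg : Integrable (fun x => f x * g x) μ) (hg : Integrable g μ) :
    ∫ x, f x * g x ∂μ = ∫ x, f x * (μ[g|m]) x ∂μ := by
  have h1 : μ[f * g|m] =ᵐ[μ] f * μ[g|m] := condExp_mul_of_stronglyMeasurable_left hf hfg hg
  calc ∫ x, f x * g x ∂μ = ∫ x, (μ[f * g|m]) x ∂μ := (integral_condExp hm (f := f * g)).symm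
    _ = ∫ x, f x * (μ[g|m]) x ∂μ := integral_congr_ae h1

/-- Orthogonality of `φ₁ - φ₀` to the tangent space: if `h ∈ L²(P₀)` has conditional
expectation given `(A, Z)` not depending on `A` (equal to `h̃(Z)`) and `E[h̃(Z)] = 0`, then
`E[h(Y,A,Z)(φ₁(Y,A,Z) - φ₀(Y,A,Z))] = 0`. -/
theorem eif_projection_orthogonality
    {Ω : Type*} [mΩ : MeasurableSpace Ω] (P : Measure Ω) [IsProbabilityMeasure P]
    (k 𝒮 : ℕ) (Y0 Y1 : Ω → ℝ) (Z : Ω → Fin k → ℝ) (A : Ω → ℝ)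
    (S : (Fin k → ℝ) → Fin 𝒮) (π : Fin 𝒮 → ℝ)
    (hπ0 : ∀ s, 0 < π s) (hπ1 : ∀ s, π s < 1)
    (hZ : Measurable Z) (hS : Measurable S) (hA : Measurable A)
    (hY0m : Measurable Y0) (hY1m : Measurable Y1)
    (hA01 : ∀ ω, A ω = 0 ∨ A ω = 1)
    (hY0 : MemLp Y0 2 P) (hY1 : MemLp Y1 2 P)
    (hprop : (P[A | MeasurableSpace.comap Z inferInstance])
      =ᵐ[P] fun ω => π (S (Z ω)))
    (m0f m1f : (Fin k → ℝ) → ℝ) (hm0f : Measurable m0f) (hm1f : Measurable m1f)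
    (hm0 : (fun ω => m0f (Z ω)) =ᵐ[P] P[Y0 | MeasurableSpace.comap Z inferInstance])
    (hm1 : (fun ω => m1f (Z ω)) =ᵐ[P] P[Y1 | MeasurableSpace.comap Z inferInstance])
    (hfun : ℝ × ℝ × (Fin k → ℝ) → ℝ) (hhfun : Measurable hfun)
    (htilde : (Fin k → ℝ) → ℝ) (hhtilde : Measurable htilde) :
    let Y : Ω → ℝ := fun ω => A ω * Y1 ω + (1 - A ω) * Y0 ω
    let H : Ω → ℝ := fun ω => hfun (Y ω, A ω, Z ω)
    let β₀ : ℝ := ∫ ω, (m1f (Z ω) - m0f (Z ω)) ∂P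
    let φ₁ : Ω → ℝ := fun ω =>
      Y ω * A ω / π (S (Z ω)) - Y ω * (1 - A ω) / (1 - π (S (Z ω)))
    let φ₀ : Ω → ℝ := fun ω =>
      A ω / π (S (Z ω)) * (Y ω - m1f (Z ω))
        - (1 - A ω) / (1 - π (S (Z ω))) * (Y ω - m0f (Z ω))
        + (m1f (Z ω) - m0f (Z ω) - β₀)
    MemLp H 2 P →
    ((fun ω => htilde (Z ω)) =ᵐ[P]
      P[H | MeasurableSpace.comap (fun ω => (A ω, Z ω)) inferInstance]) →
    (∫ ω, htilde (Z ω) ∂P = 0) →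
    ∫ ω, H ω * (φ₁ ω - φ₀ ω) ∂P = 0 := by
  intro Y H β₀ φ₁ φ₀ hH hcond hzero
  classical
  set mAZ := MeasurableSpace.comap (fun ω => (A ω, Z ω)) inferInstance with hmAZdef
  set mZ := MeasurableSpace.comap Z inferInstance with hmZdef
  have hmAZ_le : mAZ ≤ mΩ := (hA.prodMk hZ).comap_le
  have hmZ_le : mZ ≤ mΩ := hZ.comap_le
  have hpairm : Measurable[mAZ] (fun ω => (A ω, Z ω)) := Measurable.of_comap_le le_rfl
  have hZm : Measurable[mZ] Z := Measurable.of_comap_le le_rfl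
  have hπm : Measurable (fun z : Fin k → ℝ => π (S z)) := measurable_from_top.comp hS
  have hπne : ∀ z, π (S z) ≠ 0 := fun z => (hπ0 _).ne'
  have h1πpos : ∀ z, 0 < 1 - π (S z) := fun z => sub_pos.mpr (hπ1 _)
  have h1πne : ∀ z, (1 : ℝ) - π (S z) ≠ 0 := fun z => (h1πpos z).ne'
  -- a uniform bound on the inverse propensities
  obtain ⟨C, hC1, hC2⟩ : ∃ C : ℝ, (∀ s, (π s)⁻¹ ≤ C) ∧ (∀ s, (1 - π s)⁻¹ ≤ C) := by
    refine ⟨∑ s : Fin 𝒮, ((π s)⁻¹ + (1 - π s)⁻¹), fun s => ?_, fun s => ?_⟩ <;>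
    · have h1 : (π s)⁻¹ + (1 - π s)⁻¹ ≤ ∑ t : Fin 𝒮, ((π t)⁻¹ + (1 - π t)⁻¹) :=
        Finset.single_le_sum (f := fun t => (π t)⁻¹ + (1 - π t)⁻¹)
          (fun i _ => by
            have hi1 := hπ0 i
            have hi2 := sub_pos.mpr (hπ1 i)
            positivity)
          (Finset.mem_univ s)
      have h2 : 0 ≤ (1 - π s)⁻¹ := (inv_pos.mpr (sub_pos.mpr (hπ1 s))).le
      have h3 : 0 ≤ (π s)⁻¹ := (inv_pos.mpr (hπ0 s)).le
      linarith
  -- L² membership of the building blocks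
  have hm1Z : MemLp (fun ω => m1f (Z ω)) 2 P := (memLp2_condexp hmZ_le hY1).ae_eq hm1.symm
  have hm0Z : MemLp (fun ω => m0f (Z ω)) 2 P := (memLp2_condexp hmZ_le hY0).ae_eq hm0.symm
  have hTL2 : MemLp (fun ω => htilde (Z ω)) 2 P := (memLp2_condexp hmAZ_le hH).ae_eq hcond.symm
  have hc1L2 : MemLp (fun ω => m1f (Z ω) / π (S (Z ω))) 2 P := by
    refine hm1Z.of_le_mul (c := C)
      (((hm1f.comp hZ).div (hπm.comp hZ)).aestronglyMeasurable) (ae_of_all _ fun ω => ?_)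
    have he : ‖m1f (Z ω) / π (S (Z ω))‖ = ‖m1f (Z ω)‖ * (π (S (Z ω)))⁻¹ := by
      rw [norm_div, Real.norm_eq_abs (π _), abs_of_pos (hπ0 _), div_eq_mul_inv]
    rw [he, mul_comm C]
    exact mul_le_mul_of_nonneg_left (hC1 _) (norm_nonneg _)
  have hc0L2 : MemLp (fun ω => m0f (Z ω) / (1 - π (S (Z ω)))) 2 P := by
    refine hm0Z.of_le_mul (c := C)
      (((hm0f.comp hZ).div ((measurable_const.sub hπm).comp hZ)).aestronglyMeasurable)
      (ae_of_all _ fun ω => ?_)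
    have he : ‖m0f (Z ω) / (1 - π (S (Z ω)))‖ = ‖m0f (Z ω)‖ * (1 - π (S (Z ω)))⁻¹ := by
      rw [norm_div, Real.norm_eq_abs (1 - π _), abs_of_pos (h1πpos _), div_eq_mul_inv]
    rw [he, mul_comm C]
    exact mul_le_mul_of_nonneg_left (hC2 _) (norm_nonneg _)
  have hA2 : MemLp A 2 P := MemLp.of_bound hA.aestronglyMeasurable 1
    (ae_of_all _ fun ω => by rcases hA01 ω with h | h <;> simp [h])
  have hAint : Integrable A P := hA2.integrable one_le_two
  have hHint : Integrable H P := hH.integrable one_le_two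
  have hTint : Integrable (fun ω => htilde (Z ω)) P := hTL2.integrable one_le_two
  -- the function W with φ₁ - φ₀ = W
  set W : Ω → ℝ := fun ω => A ω * (m1f (Z ω) / π (S (Z ω)))
      - (1 - A ω) * (m0f (Z ω) / (1 - π (S (Z ω)))) - (m1f (Z ω) - m0f (Z ω) - β₀) with hWdef
  have hAc1 : MemLp (fun ω => A ω * (m1f (Z ω) / π (S (Z ω)))) 2 P := by
    refine hc1L2.of_le ((hA.mul ((hm1f.comp hZ).div (hπm.comp hZ))).aestronglyMeasurable)
      (ae_of_all _ fun ω => ?_)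
    rcases hA01 ω with h | h <;> simp [h] <;> positivity
  have hA1c0 : MemLp (fun ω => (1 - A ω) * (m0f (Z ω) / (1 - π (S (Z ω))))) 2 P := by
    refine hc0L2.of_le (((measurable_const.sub hA).mul
      ((hm0f.comp hZ).div ((measurable_const.sub hπm).comp hZ))).aestronglyMeasurable)
      (ae_of_all _ fun ω => ?_)
    rcases hA01 ω with h | h <;> simp [h] <;> positivity
  have hdL2 : MemLp (fun ω => m1f (Z ω) - m0f (Z ω) - β₀) 2 P :=
    (hm1Z.sub hm0Z).sub (memLp_const β₀)
  have hWL2 : MemLp W 2 P := (hAc1.sub hA1c0).sub hdL2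
  have hWsm : StronglyMeasurable[mAZ] W := by
    have hg : Measurable (fun p : ℝ × (Fin k → ℝ) => p.1 * (m1f p.2 / π (S p.2))
        - (1 - p.1) * (m0f p.2 / (1 - π (S p.2))) - (m1f p.2 - m0f p.2 - β₀)) := by
      have h1 : Measurable (fun p : ℝ × (Fin k → ℝ) => π (S p.2)) := hπm.comp measurable_snd
      exact (((measurable_fst.mul ((hm1f.comp measurable_snd).div h1)).sub
        ((measurable_const.sub measurable_fst).mul
          ((hm0f.comp measurable_snd).div (measurable_const.sub h1)))).sub
        (((hm1f.comp measurable_snd).sub (hm0f.comp measurable_snd)).sub measurable_const))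
    exact (hg.comp hpairm).stronglyMeasurable
  -- Step 1: pointwise identity H * (φ₁ - φ₀) = W * H
  have step1 : ∀ ω, H ω * (φ₁ ω - φ₀ ω) = W ω * H ω := by
    intro ω
    have hp := hπne (Z ω)
    have hq := h1πne (Z ω)
    rcases hA01 ω with h | h <;>
      · simp only [hWdef, φ₁, φ₀, Y, h]
        field_simp
        ring
  -- Step 2/3: project H onto σ(A,Z)
  have hWH_int : Integrable (fun ω => W ω * H ω) P := mul2_integrable hWL2 hH
  have step2 : ∫ ω, W ω * H ω ∂P = ∫ ω, W ω * (P[H|mAZ]) ω ∂P :=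
    integral_mul_condexp hmAZ_le hWsm hWH_int hHint
  have step3 : ∫ ω, W ω * (P[H|mAZ]) ω ∂P = ∫ ω, W ω * htilde (Z ω) ∂P := by
    refine integral_congr_ae ?_
    filter_upwards [hcond] with ω h
    rw [← h]
  -- integrability of the pieces of W * htilde(Z)
  have hc1T_int : Integrable (fun ω => m1f (Z ω) / π (S (Z ω)) * htilde (Z ω)) P :=
    mul2_integrable hc1L2 hTL2
  have hc0T_int : Integrable (fun ω => m0f (Z ω) / (1 - π (S (Z ω))) * htilde (Z ω)) P :=
    mul2_integrable hc0L2 hTL2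
  have hm1T_int : Integrable (fun ω => m1f (Z ω) * htilde (Z ω)) P :=
    mul2_integrable hm1Z hTL2
  have hm0T_int : Integrable (fun ω => m0f (Z ω) * htilde (Z ω)) P :=
    mul2_integrable hm0Z hTL2
  have hc1Tmeas : AEStronglyMeasurable[mΩ] (fun ω => m1f (Z ω) / π (S (Z ω)) * htilde (Z ω)) P :=
    (((hm1f.comp hZ).div (hπm.comp hZ)).mul (hhtilde.comp hZ)).aestronglyMeasurable
  have hc0Tmeas : AEStronglyMeasurable[mΩ]
      (fun ω => m0f (Z ω) / (1 - π (S (Z ω))) * htilde (Z ω)) P :=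
    (((hm0f.comp hZ).div ((measurable_const.sub hπm).comp hZ)).mul
      (hhtilde.comp hZ)).aestronglyMeasurable
  have hc1TA_int : Integrable (fun ω => m1f (Z ω) / π (S (Z ω)) * htilde (Z ω) * A ω) P := by
    refine hc1T_int.norm.mono' (hc1Tmeas.mul hA.aestronglyMeasurable)
      (ae_of_all _ fun ω => ?_)
    rcases hA01 ω with h | h <;> simp [h] <;> positivity
  have hc0TA_int : Integrable
      (fun ω => m0f (Z ω) / (1 - π (S (Z ω))) * htilde (Z ω) * A ω) P := by
    refine hc0T_int.norm.mono' (hc0Tmeas.mul hA.aestronglyMeasurable)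
      (ae_of_all _ fun ω => ?_)
    rcases hA01 ω with h | h <;> simp [h] <;> positivity
  have hc0TA1_int : Integrable
      (fun ω => m0f (Z ω) / (1 - π (S (Z ω))) * htilde (Z ω) * (1 - A ω)) P := by
    refine hc0T_int.norm.mono' (hc0Tmeas.mul
      (measurable_const.sub hA).aestronglyMeasurable) (ae_of_all _ fun ω => ?_)
    rcases hA01 ω with h | h <;> simp [h] <;> positivity
  have hc0Tπ_int : Integrable
      (fun ω => m0f (Z ω) / (1 - π (S (Z ω))) * htilde (Z ω) * π (S (Z ω))) P := by
    refine hc0T_int.norm.mono' (hc0Tmeas.mul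
      ((hπm.comp hZ)).aestronglyMeasurable) (ae_of_all _ fun ω => ?_)
    rw [norm_mul]
    have : ‖π (S (Z ω))‖ ≤ 1 := by
      rw [Real.norm_eq_abs, abs_of_pos (hπ0 _)]; exact (hπ1 _).le
    calc ‖m0f (Z ω) / (1 - π (S (Z ω))) * htilde (Z ω)‖ * ‖π (S (Z ω))‖
        ≤ ‖m0f (Z ω) / (1 - π (S (Z ω))) * htilde (Z ω)‖ * 1 :=
          mul_le_mul_of_nonneg_left this (norm_nonneg _)
      _ = _ := mul_one _
  have hdT_int : Integrable (fun ω => (m1f (Z ω) - m0f (Z ω) - β₀) * htilde (Z ω)) P :=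
    mul2_integrable hdL2 hTL2
  -- strong measurability w.r.t. σ(Z)
  have hfsm1 : StronglyMeasurable[mZ] (fun ω => m1f (Z ω) / π (S (Z ω)) * htilde (Z ω)) :=
    (((hm1f.comp hZm).div (hπm.comp hZm)).mul (hhtilde.comp hZm)).stronglyMeasurable
  have hfsm0 : StronglyMeasurable[mZ]
      (fun ω => m0f (Z ω) / (1 - π (S (Z ω))) * htilde (Z ω)) :=
    (((hm0f.comp hZm).div ((measurable_const.sub hπm).comp hZm)).mul
      (hhtilde.comp hZm)).stronglyMeasurable
  -- Step 5: the A-term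
  have e1 : ∫ ω, m1f (Z ω) / π (S (Z ω)) * htilde (Z ω) * A ω ∂P
      = ∫ ω, m1f (Z ω) * htilde (Z ω) ∂P := by
    rw [integral_mul_condexp hmZ_le hfsm1 hc1TA_int hAint]
    refine integral_congr_ae ?_
    filter_upwards [hprop] with ω hω
    rw [hω]
    have hp := hπne (Z ω)
    field_simp
  have e0A : ∫ ω, m0f (Z ω) / (1 - π (S (Z ω))) * htilde (Z ω) * A ω ∂P
      = ∫ ω, m0f (Z ω) / (1 - π (S (Z ω))) * htilde (Z ω) * π (S (Z ω)) ∂P := by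
    rw [integral_mul_condexp hmZ_le hfsm0 hc0TA_int hAint]
    refine integral_congr_ae ?_
    filter_upwards [hprop] with ω hω
    rw [hω]
  -- Step 6: the (1-A)-term
  have e0 : ∫ ω, m0f (Z ω) / (1 - π (S (Z ω))) * htilde (Z ω) * (1 - A ω) ∂P
      = ∫ ω, m0f (Z ω) * htilde (Z ω) ∂P := by
    calc ∫ ω, m0f (Z ω) / (1 - π (S (Z ω))) * htilde (Z ω) * (1 - A ω) ∂P
        = ∫ ω, (m0f (Z ω) / (1 - π (S (Z ω))) * htilde (Z ω)
            - m0f (Z ω) / (1 - π (S (Z ω))) * htilde (Z ω) * A ω) ∂P :=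
          integral_congr_ae (ae_of_all _ fun ω => by ring)
      _ = (∫ ω, m0f (Z ω) / (1 - π (S (Z ω))) * htilde (Z ω) ∂P)
            - ∫ ω, m0f (Z ω) / (1 - π (S (Z ω))) * htilde (Z ω) * A ω ∂P :=
          integral_sub hc0T_int hc0TA_int
      _ = (∫ ω, m0f (Z ω) / (1 - π (S (Z ω))) * htilde (Z ω) ∂P)
            - ∫ ω, m0f (Z ω) / (1 - π (S (Z ω))) * htilde (Z ω) * π (S (Z ω)) ∂P := by
          rw [e0A]
      _ = ∫ ω, (m0f (Z ω) / (1 - π (S (Z ω))) * htilde (Z ω)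
            - m0f (Z ω) / (1 - π (S (Z ω))) * htilde (Z ω) * π (S (Z ω))) ∂P :=
          (integral_sub hc0T_int hc0Tπ_int).symm
      _ = ∫ ω, m0f (Z ω) * htilde (Z ω) ∂P := by
          refine integral_congr_ae (ae_of_all _ fun ω => ?_)
          have hq := h1πne (Z ω)
          field_simp
  -- Step 7: the deterministic term
  have e2 : ∫ ω, (m1f (Z ω) - m0f (Z ω) - β₀) * htilde (Z ω) ∂P
      = (∫ ω, m1f (Z ω) * htilde (Z ω) ∂P) - ∫ ω, m0f (Z ω) * htilde (Z ω) ∂P := by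
    have h3 : Integrable (fun ω => β₀ * htilde (Z ω)) P := hTint.const_mul β₀
    calc ∫ ω, (m1f (Z ω) - m0f (Z ω) - β₀) * htilde (Z ω) ∂P
        = ∫ ω, (m1f (Z ω) * htilde (Z ω) - m0f (Z ω) * htilde (Z ω)
            - β₀ * htilde (Z ω)) ∂P := integral_congr_ae (ae_of_all _ fun ω => by ring)
      _ = (∫ ω, (m1f (Z ω) * htilde (Z ω) - m0f (Z ω) * htilde (Z ω)) ∂P)
            - ∫ ω, β₀ * htilde (Z ω) ∂P := integral_sub (hm1T_int.sub hm0T_int) h3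
      _ = (∫ ω, m1f (Z ω) * htilde (Z ω) ∂P) - (∫ ω, m0f (Z ω) * htilde (Z ω) ∂P)
            - β₀ * ∫ ω, htilde (Z ω) ∂P := by
          rw [integral_sub hm1T_int hm0T_int, integral_const_mul]
      _ = _ := by rw [hzero]; ring
  -- Step 4: expand ∫ W * htilde(Z)
  have expandW : ∫ ω, W ω * htilde (Z ω) ∂P
      = (∫ ω, m1f (Z ω) / π (S (Z ω)) * htilde (Z ω) * A ω ∂P)
        - (∫ ω, m0f (Z ω) / (1 - π (S (Z ω))) * htilde (Z ω) * (1 - A ω) ∂P)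
        - ∫ ω, (m1f (Z ω) - m0f (Z ω) - β₀) * htilde (Z ω) ∂P := by
    calc ∫ ω, W ω * htilde (Z ω) ∂P
        = ∫ ω, (m1f (Z ω) / π (S (Z ω)) * htilde (Z ω) * A ω
            - m0f (Z ω) / (1 - π (S (Z ω))) * htilde (Z ω) * (1 - A ω)
            - (m1f (Z ω) - m0f (Z ω) - β₀) * htilde (Z ω)) ∂P := by
          refine integral_congr_ae (ae_of_all _ fun ω => ?_)
          simp only [hWdef]
          ring
      _ = (∫ ω, (m1f (Z ω) / π (S (Z ω)) * htilde (Z ω) * A ω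
            - m0f (Z ω) / (1 - π (S (Z ω))) * htilde (Z ω) * (1 - A ω)) ∂P)
            - ∫ ω, (m1f (Z ω) - m0f (Z ω) - β₀) * htilde (Z ω) ∂P := by
          have hsub : Integrable (fun ω => m1f (Z ω) / π (S (Z ω)) * htilde (Z ω) * A ω
              - m0f (Z ω) / (1 - π (S (Z ω))) * htilde (Z ω) * (1 - A ω)) P :=
            hc1TA_int.sub hc0TA1_int
          exact integral_sub hsub hdT_int
      _ = _ := by rw [integral_sub hc1TA_int hc0TA1_int]
  -- conclusion
  calc ∫ ω, H ω * (φ₁ ω - φ₀ ω) ∂P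
      = ∫ ω, W ω * H ω ∂P := integral_congr_ae (ae_of_all _ step1)
    _ = ∫ ω, W ω * (P[H|mAZ]) ω ∂P := step2
    _ = ∫ ω, W ω * htilde (Z ω) ∂P := step3
    _ = 0 := by rw [expandW, e1, e0, e2]; ring
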